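/- Let n ≥ 1 and c ∈ ℤ^n with c ≥ 0. Define λ_i := c_1 + c_2 + ⋯ + c_{n−i+1} for i = 1,…,n and λ_{n+1} := 0. Then the map sending each feasible function f ∈ F(c) to the triangular array (x_{ij})_{1 ≤ j ≤ i ≤ n} given by x_{ij} := (Σ_{v ∈ V_i(j)} f(v)) + c_1 + ⋯ + c_{i−j} (the sum c_1 + ⋯ + c_{i−j} being 0 when i = j) is a bijection from F(c) onto the set of Gelfand–Tsetlin patterns for λ. -/

import Mathlib

open scoped Classical

namespace CrystalA

/-- A node `(i, k, j)` of the (extended) supporting graph stands for `v_i^k(j)`. -/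
abbrev Node : Type := ℕ × ℕ × ℕ

/-- Membership in the supporting graph `G`:
`1 ≤ j ≤ i ≤ n` and `i - j + 1 ≤ k ≤ n - j + 1`. -/
def IsNode (n : ℕ) (v : Node) : Prop :=
  1 ≤ v.2.2 ∧ v.2.2 ≤ v.1 ∧ v.1 ≤ n ∧ v.1 + 1 ≤ v.2.1 + v.2.2 ∧ v.2.1 + v.2.2 ≤ n + 1

/-- Membership in the extended graph `Ḡ`: `0 ≤ j ≤ n`, `j ≤ i ≤ n + 1`, `1 ≤ k ≤ n`. -/
def IsExtNode (n : ℕ) (v : Node) : Prop :=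
  v.2.2 ≤ n ∧ v.2.2 ≤ v.1 ∧ v.1 ≤ n + 1 ∧ 1 ≤ v.2.1 ∧ v.2.1 ≤ n

/-- Ascending step `v_i^k(j) → v_{i-1}^k(j)`. -/
def Asc (u w : Node) : Prop := u.2.1 = w.2.1 ∧ u.2.2 = w.2.2 ∧ u.1 = w.1 + 1

/-- Descending step `v_i^k(j) → v_{i+1}^k(j+1)`. -/
def Desc (u w : Node) : Prop := u.2.1 = w.2.1 ∧ w.2.2 = u.2.2 + 1 ∧ w.1 = u.1 + 1

/-- Edges of the supporting graph `G`. -/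
def GEdge (n : ℕ) (u w : Node) : Prop := IsNode n u ∧ IsNode n w ∧ (Asc u w ∨ Desc u w)

/-- Edges of the extended graph `Ḡ`. -/
def ExtEdge (n : ℕ) (u w : Node) : Prop := IsExtNode n u ∧ IsExtNode n w ∧ (Asc u w ∨ Desc u w)

/-- The extension of `f : V(G) → ℤ` to `Ḡ`: on an extra node it takes value `c_k`
if there is a directed path in `Ḡ^k` from it to a node of `G^k`, and `0` otherwise. -/
noncomputable def ext (n : ℕ) (c : ℕ → ℤ) (f : Node → ℤ) (v : Node) : ℤ :=
  if IsNode n v then f v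
  else if ∃ w, IsNode n w ∧ Relation.ReflTransGen (ExtEdge n) v w then c v.2.1 else 0

/-- Increment `∂f` of (the extension of) `f` on the edge `(u, w)`. -/
noncomputable def dP (n : ℕ) (c : ℕ → ℤ) (f : Node → ℤ) (u w : Node) : ℤ :=
  ext n c f u - ext n c f w

/-- Head of the SE-edge of `v = v_i^k(j)`, namely `v_{i+1}^k(j+1)`. -/
def seNode (v : Node) : Node := (v.1 + 1, v.2.1, v.2.2 + 1)

/-- Tail of the SW-edge of `v = v_i^k(j)`, namely `v_{i+1}^k(j)`. -/
def swNode (v : Node) : Node := (v.1 + 1, v.2.1, v.2.2)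

/-- Tail of the NW-edge of `v = v_i^k(j)`, namely `v_{i-1}^k(j-1)`. -/
def nwNode (v : Node) : Node := (v.1 - 1, v.2.1, v.2.2 - 1)

/-- The SE-edge of `v` is tight for `f`. -/
def SEtight (n : ℕ) (c : ℕ → ℤ) (f : Node → ℤ) (v : Node) : Prop :=
  dP n c f v (seNode v) = 0

/-- The SW-edge of `v` is tight for `f`. -/
def SWtight (n : ℕ) (c : ℕ → ℤ) (f : Node → ℤ) (v : Node) : Prop :=
  dP n c f (swNode v) v = 0

/-- The node `v_i^k(j)` has the switch property in the multinode `V_i(j)`: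
SE-edges of preceding nodes are tight and SW-edges of succeeding nodes are tight. -/
def SwitchAt (n : ℕ) (c : ℕ → ℤ) (f : Node → ℤ) (i j k : ℕ) : Prop :=
  (∀ k', i + 1 ≤ k' + j → k' < k → SEtight n c f (i, k', j)) ∧
  (∀ k', k < k' → k' + j ≤ n + 1 → SWtight n c f (i, k', j))

/-- Feasible functions of the crossing model (normalized to vanish off `G`). -/
def Feasible (n : ℕ) (c : ℕ → ℤ) (f : Node → ℤ) : Prop :=
  (∀ u w, GEdge n u w → 0 ≤ f u - f w) ∧
  (∀ v, IsNode n v → 0 ≤ f v ∧ f v ≤ c v.2.1) ∧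
  (∀ i j, 1 ≤ j → j ≤ i → i ≤ n → ∃ k, i + 1 ≤ k + j ∧ k + j ≤ n + 1 ∧ SwitchAt n c f i j k) ∧
  (∀ v, ¬ IsNode n v → f v = 0)

/-- `v_i^k(j)` is the switch-node of the multinode `V_i(j)`: the first node
with the switch property. -/
def IsSwitchNode (n : ℕ) (c : ℕ → ℤ) (f : Node → ℤ) (i j k : ℕ) : Prop :=
  i + 1 ≤ k + j ∧ k + j ≤ n + 1 ∧ SwitchAt n c f i j k ∧
  ∀ k', i + 1 ≤ k' + j → SwitchAt n c f i j k' → k ≤ k'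

/-- The slack `ε(v)` at a node `v = v_i^k(j)`. -/
noncomputable def slack (n : ℕ) (c : ℕ → ℤ) (f : Node → ℤ) (v : Node) : ℤ :=
  dP n c f (nwNode v) v - dP n c f (v.1, v.2.1, v.2.2 - 1) (v.1 + 1, v.2.1, v.2.2)

/-- The total slack `ε_i(j)` at the multinode `V_i(j)`. -/
noncomputable def epsSum (n : ℕ) (c : ℕ → ℤ) (f : Node → ℤ) (i j : ℕ) : ℤ :=
  ∑ k ∈ Finset.Icc (i + 1 - j) (n + 1 - j), slack n c f (i, k, j)

/-- `ε_i(p, j) = ε_i(p) + ⋯ + ε_i(j)`. -/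
noncomputable def epsInt (n : ℕ) (c : ℕ → ℤ) (f : Node → ℤ) (i p j : ℕ) : ℤ :=
  ∑ q ∈ Finset.Icc p j, epsSum n c f i q

/-- The reduced slack `ε̃_i(j)`. -/
noncomputable def redSlack (n : ℕ) (c : ℕ → ℤ) (f : Node → ℤ) (i j : ℕ) : ℤ :=
  if h : (Finset.Icc 1 j).Nonempty
  then max 0 ((Finset.Icc 1 j).inf' h fun p => epsInt n c f i p j)
  else 0

/-- `V_i(j)` is the active multinode for `f` and color `i`. -/
def Active (n : ℕ) (c : ℕ → ℤ) (f : Node → ℤ) (i j : ℕ) : Prop :=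
  1 ≤ j ∧ j ≤ i ∧ 0 < redSlack n c f i j ∧ ∀ q, j < q → q ≤ i → redSlack n c f i q = 0

/-- The edge relation of color `i` of the crystal graph `K(c)`:
`g = φ_i(f)` with `f, g` feasible. -/
def Move (n : ℕ) (c : ℕ → ℤ) (i : ℕ) (f g : Node → ℤ) : Prop :=
  Feasible n c f ∧ Feasible n c g ∧ 1 ≤ i ∧ i ≤ n ∧
  ∃ j k, Active n c f i j ∧ IsSwitchNode n c f i j k ∧
    g = Function.update f (i, k, j) (f (i, k, j) + 1)

/-- `SeqRel n c L f g`: applying the operators `F_i` for `i ∈ L` (head first)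
to `f` is defined and yields `g`. -/
def SeqRel (n : ℕ) (c : ℕ → ℤ) : List ℕ → (Node → ℤ) → (Node → ℤ) → Prop
  | [], f, g => f = g
  | i :: L, f, g => ∃ h, Move n c i f h ∧ SeqRel n c L h g

/-- The substring `w_{m,k,j} = F_j F_{j+1} ⋯ F_{j+k-1}` (rightmost applied first),
as a list of colors in order of application. -/
def wList (k j : ℕ) : List ℕ := (List.range k).map fun t => j + k - 1 - t

/-- The operator string `S_{m,k} = w_{m,k,m-k+1} ⋯ w_{m,k,2} w_{m,k,1}`
as a list of colors in order of application. -/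
def sList (m k : ℕ) : List ℕ := ((List.range (m - k + 1)).map fun t => wList k (t + 1)).flatten

/-- The `p`-th power `S_{m,k}^p` as a list of colors in order of application. -/
def sPow (m k p : ℕ) : List ℕ := (List.replicate p (sList m k)).flatten

/-- The composite `S_{m,kmax}^{p kmax} ∘ ⋯ ∘ S_{m,1}^{p 1}` as a list of colors
in order of application. -/
def sPowChain (m : ℕ) (p : ℕ → ℕ) (kmax : ℕ) : List ℕ :=
  ((List.range kmax).map fun t => sPow m (t + 1) (p (t + 1))).flatten

/-- Replacing each operator `F_j` by `F_{j+1}` in a string. -/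
def shiftList (L : List ℕ) : List ℕ := L.map (· + 1)

/-- The string `T_m` obtained from `S_{n-1,m-1}` by replacing each `F_j` by `F_{j+1}`. -/
def tList (n m : ℕ) : List ℕ := shiftList (sList (n - 1) (m - 1))

/-- The composite `T_n^{q n} ∘ ⋯ ∘ T_2^{q 2}` as a list of colors in order of application. -/
def tChain (n : ℕ) (q : ℕ → ℕ) : List ℕ :=
  ((List.range (n - 1)).map fun t => (List.replicate (q (t + 2)) (tList n (t + 2))).flatten).flatten

/-- The principal function `f[a]`, constant `a_k` on `G^k`. -/
noncomputable def principal (n : ℕ) (a : ℕ → ℤ) : Node → ℤ := fun v =>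
  if IsNode n v then a v.2.1 else 0

/-- One (undirected) step in the subgraph of `K(c)` with colors `lo, …, hi`. -/
def ColsStep (n : ℕ) (c : ℕ → ℤ) (lo hi : ℕ) (f g : Node → ℤ) : Prop :=
  ∃ i, lo ≤ i ∧ i ≤ hi ∧ (Move n c i f g ∨ Move n c i g f)

/-- `f` and `g` lie in the same connected component of the subgraph of `K(c)`
formed by all vertices and the edges of colors `lo, …, hi`. -/
def SameComp (n : ℕ) (c : ℕ → ℤ) (lo hi : ℕ) (f g : Node → ℤ) : Prop :=
  Relation.ReflTransGen (ColsStep n c lo hi) f g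

/-- Reachability by directed paths in `K(c)`. -/
def Reach (n : ℕ) (c : ℕ → ℤ) (f g : Node → ℤ) : Prop :=
  Relation.ReflTransGen (fun x y => ∃ i, Move n c i x y) f g

/-- The function `f_{a,Δ}` (with the renaming `x_m(j) = v_{m+j-1}^k(j)`, `m = i - j + 1`). -/
noncomputable def fDelta (n : ℕ) (a Δ : ℕ → ℤ) : Node → ℤ := fun v =>
  if IsNode n v then
    (let k := v.2.1
     let j := v.2.2
     let m := v.1 + 1 - v.2.2
     if m = k then (if j = n - k + 1 then a k else a k + max (Δ k) 0)
     else if j = n - k + 1 then a k + min (Δ (k - 1)) 0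
     else a k + max (Δ k) 0 + min (Δ (k - 1)) 0)
  else 0

/-! ### Crystal axioms -/

/-- `h_i(v)`: the number of edges of the maximal `i`-colored path starting at `v`. -/
noncomputable def headLen {V : Type*} (E : ℕ → V → V → Prop) (i : ℕ) (v : V) : ℕ :=
  sSup {m | ∃ g : ℕ → V, g 0 = v ∧ ∀ l, l < m → E i (g l) (g (l + 1))}

/-- `t_i(v)`: the number of edges of the maximal `i`-colored path ending at `v`. -/
noncomputable def tailLen {V : Type*} (E : ℕ → V → V → Prop) (i : ℕ) (v : V) : ℕ :=
  sSup {m | ∃ g : ℕ → V, g m = v ∧ ∀ l, l < m → E i (g l) (g (l + 1))}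

/-- The label `ℓ_j(e) = h_j(v) - h_j(u)` of an edge `e = (u, v)` w.r.t. color `j`. -/
noncomputable def lab {V : Type*} (E : ℕ → V → V → Prop) (j : ℕ) (u v : V) : ℤ :=
  (headLen E j v : ℤ) - (headLen E j u : ℤ)

/-- Neighboring colors: `|i - j| = 1`. -/
def Nbr (i j : ℕ) : Prop := i = j + 1 ∨ j = i + 1

/-- Distant colors: `|i - j| ≥ 2`. -/
def Dist (i j : ℕ) : Prop := i + 2 ≤ j ∨ j + 2 ≤ i

/-- The (regular) `A_n`-crystal axioms for an `n`-colored digraph with edge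
relations `E i` (`i` the color). -/
structure IsAnCrystal (n : ℕ) {V : Type*} (E : ℕ → V → V → Prop) : Prop where
  colorBound : ∀ i u v, E i u v → 1 ≤ i ∧ i ≤ n
  connected : ∀ u v : V, Relation.ReflTransGen (fun x y => ∃ i, E i x y ∨ E i y x) u v
  outFun : ∀ i u v v', E i u v → E i u v' → v = v'
  inFun : ∀ i u u' v, E i u v → E i u' v → u = u'
  a1 : ∀ i v, ∃ (t h : ℕ) (g : ℕ → V), g t = v ∧ (∀ m, m < t + h → E i (g m) (g (m + 1))) ∧
      (∀ m m', m ≤ t + h → m' ≤ t + h → g m = g m' → m = m') ∧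
      (¬ ∃ u, E i u (g 0)) ∧ (¬ ∃ w, E i (g (t + h)) w)
  a2_tail : ∀ i j u v, E i u v → 1 ≤ j → j ≤ n → j ≠ i → tailLen E j v ≤ tailLen E j u
  a2_head : ∀ i j u v, E i u v → 1 ≤ j → j ≤ n → j ≠ i → headLen E j u ≤ headLen E j v
  a2_diff : ∀ i j u v, E i u v → 1 ≤ j → j ≤ n → j ≠ i →
      ((headLen E j u : ℤ) - (tailLen E j u : ℤ)) - ((headLen E j v : ℤ) - (tailLen E j v : ℤ))
        = if Nbr i j then -1 else 0
  a2_convex : ∀ i j u v w, E i u v → E i v w → 1 ≤ j → j ≤ n → j ≠ i →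
      2 * headLen E j v ≤ headLen E j u + headLen E j w
  a3_fwd : ∀ i j u v v', Nbr i j → E i u v → E j u v' → lab E j u v = 0 →
      lab E i u v' = 1 ∧ ∃ w, E i v' w ∧ E j v w
  a3_bwd : ∀ i j u u' v, Nbr i j → E i u v → E j u' v → lab E j u v = 1 →
      lab E i u' v = 0 ∧ ∃ w, E i w u' ∧ E j w u
  a4_fwd : ∀ i j u v v', Nbr i j → E i u v → E j u v' → lab E j u v = 1 → lab E i u v' = 1 →
      ∃ w x2 x3 y2 y3, E j v x2 ∧ E j x2 x3 ∧ E i x3 w ∧ E i v' y2 ∧ E i y2 y3 ∧ E j y3 w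
  a4_bwd : ∀ i j u u' v, Nbr i j → E i u v → E j u' v → lab E j u v = 0 → lab E i u' v = 0 →
      ∃ w x2 x3 y2 y3, E j x2 u ∧ E j x3 x2 ∧ E i w x3 ∧ E i y2 u' ∧ E i y3 y2 ∧ E j w y3
  a5_ff : ∀ i j v x w y w', Dist i j → E j v x → E i x w → E i v y → E j y w' → w = w'
  a5_fb : ∀ i j v x w y w', Dist i j → E j x v → E i x w → E i v y → E j w' y → w = w'
  a5_bb : ∀ i j v x w y w', Dist i j → E j x v → E i w x → E i y v → E j w' y → w = w'


/-- The map sending a feasible function to a triangular array (extended by `0`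
outside the triangle `1 ≤ j ≤ i ≤ n`). -/
noncomputable def gtMap (n : ℕ) (c : ℕ → ℤ) (f : Node → ℤ) : ℕ → ℕ → ℤ := fun i j =>
  if 1 ≤ j ∧ j ≤ i ∧ i ≤ n then
    (∑ k ∈ Finset.Icc (i + 1 - j) (n + 1 - j), f (i, k, j)) + ∑ t ∈ Finset.Icc 1 (i - j), c t
  else 0

/-- Gelfand–Tsetlin patterns for the partition `λ_i = c_1 + ⋯ + c_{n-i+1}`
(triangular arrays, extended by `0` outside the triangle). -/
def IsGT (n : ℕ) (c : ℕ → ℤ) (x : ℕ → ℕ → ℤ) : Prop :=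
  (∀ i j, ¬(1 ≤ j ∧ j ≤ i ∧ i ≤ n) → x i j = 0) ∧
  (∀ i j, 1 ≤ j → j + 1 ≤ i → i ≤ n → x (i - 1) j ≤ x i j) ∧
  (∀ i j, 1 ≤ j → j ≤ i → i + 1 ≤ n → x (i + 1) (j + 1) ≤ x i j) ∧
  (∀ i, 1 ≤ i → i ≤ n →
    x n i ≤ (∑ t ∈ Finset.Icc 1 (n - i + 1), c t) ∧
    (∑ t ∈ Finset.Icc 1 (n - i), c t) ≤ x n i)


open Finset

noncomputable def gPof (m K : ℕ) (a b : ℕ → ℤ) (S : ℤ) (p : ℕ) : ℤ :=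
  max (∑ t ∈ Ico m p, a t) (S - ∑ t ∈ Ico p (K+1), b t)

noncomputable def stairFun (m K : ℕ) (a b : ℕ → ℤ) (S : ℤ) (t : ℕ) : ℤ :=
  gPof m K a b S (t+1) - gPof m K a b S t

section stair
variable (m K : ℕ) (a b : ℕ → ℤ) (S : ℤ)

lemma Bsplit (t : ℕ) (h1 : m ≤ t) (h2 : t ≤ K) :
    ∑ u ∈ Ico t (K+1), b u = b t + ∑ u ∈ Ico (t+1) (K+1), b u := by
  rw [← Finset.sum_Ico_consecutive _ (by omega : t ≤ t+1) (by omega : t+1 ≤ K+1)]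
  simp

lemma stairFun_bounds (hab : ∀ t, m ≤ t → t ≤ K → a t ≤ b t) (t : ℕ) (h1 : m ≤ t) (h2 : t ≤ K) :
    a t ≤ stairFun m K a b S t ∧ stairFun m K a b S t ≤ b t := by
  have hA : ∑ u ∈ Ico m (t+1), a u = (∑ u ∈ Ico m t, a u) + a t :=
    Finset.sum_Ico_succ_top h1 a
  have hB := Bsplit m K b t h1 h2
  have hab' := hab t h1 h2
  unfold stairFun gPof
  rw [hA, hB]
  omega

lemma stairFun_sum (h1 : ∑ t ∈ Ico m (K+1), a t ≤ S) (h2 : S ≤ ∑ t ∈ Ico m (K+1), b t)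
    (hmK : m ≤ K) :
    ∑ t ∈ Ico m (K+1), stairFun m K a b S t = S := by
  unfold stairFun
  have htel : ∑ t ∈ Finset.Ico m (K+1), (gPof m K a b S (t+1) - gPof m K a b S t)
      = gPof m K a b S (K+1) - gPof m K a b S m := by
    rw [Finset.sum_Ico_eq_sum_range]
    have h2 := Finset.sum_range_sub (fun t => gPof m K a b S (m + t)) (K+1-m)
    simp only [← Nat.add_assoc] at h2
    rw [show m + (K+1-m) = K+1 by omega, Nat.add_zero] at h2
    exact h2
  rw [htel]
  unfold gPof
  rw [Finset.Ico_self, Finset.Ico_self, Finset.sum_empty, Finset.sum_empty]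
  omega

lemma stairFun_switch (hab : ∀ t, m ≤ t → t ≤ K → a t ≤ b t)
    (h1 : ∑ t ∈ Ico m (K+1), a t ≤ S) (hmK : m ≤ K) :
    ∃ k₀, m ≤ k₀ ∧ k₀ ≤ K ∧ (∀ t, m ≤ t → t < k₀ → stairFun m K a b S t = a t) ∧
      (∀ t, k₀ < t → t ≤ K → stairFun m K a b S t = b t) := by
  have hex : ∃ p, m ≤ p ∧ ∑ u ∈ Ico m p, a u ≤ S - ∑ u ∈ Ico p (K+1), b u := by
    refine ⟨K+1, by omega, ?_⟩
    rw [Finset.Ico_self, Finset.sum_empty]; omega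
  set q := Nat.find hex with hq
  obtain ⟨hqm, hqle⟩ := Nat.find_spec hex
  have hqK : q ≤ K + 1 := Nat.find_min' hex ⟨by omega, by rw [Finset.Ico_self, Finset.sum_empty]; omega⟩
  have hmin : ∀ p, p < q → m ≤ p → ¬ (∑ u ∈ Ico m p, a u ≤ S - ∑ u ∈ Ico p (K+1), b u) := by
    intro p hp hmp hle
    exact Nat.find_min hex hp ⟨hmp, hle⟩
  -- propagation upward
  have hup : ∀ p, q ≤ p → p ≤ K + 1 → ∑ u ∈ Ico m p, a u ≤ S - ∑ u ∈ Ico p (K+1), b u := by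
    intro p hp hpK
    induction p, hp using Nat.le_induction with
    | base => exact hqle
    | succ p hqp ih =>
      have hpK' : p ≤ K := by omega
      have hA : ∑ u ∈ Ico m (p+1), a u = (∑ u ∈ Ico m p, a u) + a p :=
        Finset.sum_Ico_succ_top (by omega) a
      have hB := Bsplit m K b p (by omega) hpK'
      have := ih (by omega)
      have := hab p (by omega) hpK'
      omega
  -- gP values
  have hgA : ∀ p, m ≤ p → p < q → gPof m K a b S p = ∑ u ∈ Ico m p, a u := by
    intro p h1 h2
    have := hmin p h2 h1
    unfold gPof; omega
  have hgB : ∀ p, q ≤ p → p ≤ K+1 → gPof m K a b S p = S - ∑ u ∈ Ico p (K+1), b u := by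
    intro p h1 h2
    have := hup p h1 h2
    unfold gPof; omega
  refine ⟨max m (q-1), le_max_left _ _, by omega, ?_, ?_⟩
  · intro t hmt ht
    have ht1 : t + 1 < q := by omega
    unfold stairFun
    rw [hgA t hmt (by omega), hgA (t+1) (by omega) ht1, Finset.sum_Ico_succ_top hmt]
    ring
  · intro t ht htK
    have hqt : q ≤ t := by omega
    unfold stairFun
    rw [hgB t hqt (by omega), hgB (t+1) (by omega) (by omega), Bsplit m K b t (by omega) htK]
    ring

end stair

open Finset

lemma stair_partial_sum (m K : ℕ) (a b : ℕ → ℤ) (f : ℕ → ℤ)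
    (hf : ∀ t, m ≤ t → t ≤ K → a t ≤ f t ∧ f t ≤ b t)
    (k₀ : ℕ) (hk₀m : m ≤ k₀) (hk₀K : k₀ ≤ K)
    (hlo : ∀ t, m ≤ t → t < k₀ → f t = a t) (hhi : ∀ t, k₀ < t → t ≤ K → f t = b t)
    (p : ℕ) (hp1 : m ≤ p) (hp2 : p ≤ K+1) :
    ∑ t ∈ Ico m p, f t = gPof m K a b (∑ t ∈ Ico m (K+1), f t) p := by
  have hsplit : ∑ t ∈ Ico m p, f t + ∑ t ∈ Ico p (K+1), f t = ∑ t ∈ Ico m (K+1), f t :=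
    Finset.sum_Ico_consecutive _ hp1 hp2
  rcases le_or_gt p k₀ with hcase | hcase
  · have hfa : ∑ t ∈ Ico m p, f t = ∑ t ∈ Ico m p, a t := by
      refine Finset.sum_congr rfl fun t ht => ?_
      rw [Finset.mem_Ico] at ht
      exact hlo t ht.1 (by omega)
    have hfb : ∑ t ∈ Ico p (K+1), f t ≤ ∑ t ∈ Ico p (K+1), b t := by
      refine Finset.sum_le_sum fun t ht => ?_
      rw [Finset.mem_Ico] at ht
      exact (hf t (by omega) (by omega)).2
    unfold gPof
    omega
  · have hfb : ∑ t ∈ Ico p (K+1), f t = ∑ t ∈ Ico p (K+1), b t := by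
      refine Finset.sum_congr rfl fun t ht => ?_
      rw [Finset.mem_Ico] at ht
      exact hhi t (by omega) (by omega)
    have hfa : ∑ t ∈ Ico m p, a t ≤ ∑ t ∈ Ico m p, f t := by
      refine Finset.sum_le_sum fun t ht => ?_
      rw [Finset.mem_Ico] at ht
      exact (hf t (by omega) (by omega)).1
    unfold gPof
    omega

lemma stair_unique (m K : ℕ) (a b : ℕ → ℤ) (f f' : ℕ → ℤ)
    (hf : ∀ t, m ≤ t → t ≤ K → a t ≤ f t ∧ f t ≤ b t)
    (hf' : ∀ t, m ≤ t → t ≤ K → a t ≤ f' t ∧ f' t ≤ b t)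
    (hsw : ∃ k₀, m ≤ k₀ ∧ k₀ ≤ K ∧ (∀ t, m ≤ t → t < k₀ → f t = a t) ∧
      (∀ t, k₀ < t → t ≤ K → f t = b t))
    (hsw' : ∃ k₀, m ≤ k₀ ∧ k₀ ≤ K ∧ (∀ t, m ≤ t → t < k₀ → f' t = a t) ∧
      (∀ t, k₀ < t → t ≤ K → f' t = b t))
    (hs : ∑ t ∈ Ico m (K+1), f t = ∑ t ∈ Ico m (K+1), f' t)
    (t : ℕ) (ht1 : m ≤ t) (ht2 : t ≤ K) : f t = f' t := by
  obtain ⟨k₀, h1, h2, h3, h4⟩ := hsw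
  obtain ⟨k₀', h1', h2', h3', h4'⟩ := hsw'
  have e1 := stair_partial_sum m K a b f hf k₀ h1 h2 h3 h4 t ht1 (by omega)
  have e2 := stair_partial_sum m K a b f hf k₀ h1 h2 h3 h4 (t+1) (by omega) (by omega)
  have e1' := stair_partial_sum m K a b f' hf' k₀' h1' h2' h3' h4' t ht1 (by omega)
  have e2' := stair_partial_sum m K a b f' hf' k₀' h1' h2' h3' h4' (t+1) (by omega) (by omega)
  have d : ∑ u ∈ Ico m (t+1), f u = ∑ u ∈ Ico m t, f u + f t := Finset.sum_Ico_succ_top ht1 f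
  have d' : ∑ u ∈ Ico m (t+1), f' u = ∑ u ∈ Ico m t, f' u + f' t := Finset.sum_Ico_succ_top ht1 f'
  rw [hs] at e1 e2
  omega

open Finset
section
variable {n : ℕ} {c : ℕ → ℤ} {f : Node → ℤ}

lemma isNode_iff {i k j : ℕ} :
    IsNode n (i, k, j) ↔ (1 ≤ j ∧ j ≤ i ∧ i ≤ n ∧ i + 1 ≤ k + j ∧ k + j ≤ n + 1) := Iff.rfl

lemma isExtNode_iff {i k j : ℕ} :
    IsExtNode n (i, k, j) ↔ (j ≤ n ∧ j ≤ i ∧ i ≤ n + 1 ∧ 1 ≤ k ∧ k ≤ n) := Iff.rfl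

lemma extEdge_mono {u w : Node} (h : Relation.ReflTransGen (ExtEdge n) u w) :
    u.2.1 = w.2.1 ∧ u.2.1 + u.2.2 ≤ w.2.1 + w.2.2 := by
  induction h with
  | refl => exact ⟨rfl, le_refl _⟩
  | tail hs hstep ih =>
    obtain ⟨-, -, hd⟩ := hstep
    rcases hd with ⟨h1, h2, h3⟩ | ⟨h1, h2, h3⟩ <;> omega

lemma ext_node {v : Node} (hv : IsNode n v) : ext n c f v = f v := by
  rw [ext, if_pos hv]

lemma ext_far {v : Node} (hv : n + 2 ≤ v.2.1 + v.2.2) : ext n c f v = 0 := by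
  have hnn : ¬ IsNode n v := fun h => by have := h.2.2.2.2; omega
  rw [ext, if_neg hnn, if_neg]
  rintro ⟨w, hw, hreach⟩
  have := extEdge_mono hreach
  have := hw.2.2.2.2
  omega

lemma isExtNode_of_isNode {v : Node} (hv : IsNode n v) : IsExtNode n v := by
  obtain ⟨h1, h2, h3, h4, h5⟩ := hv
  exact ⟨by omega, h2, by omega, by omega, by omega⟩

/-- ext value of `(i+1, k, j)` when it is not a node but `(i,k,j)` is. -/
lemma ext_below {i k j : ℕ} (hnn : ¬ IsNode n (i+1, k, j)) (hv : IsNode n (i, k, j)) :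
    ext n c f (i+1, k, j) = c k := by
  rw [ext, if_neg hnn, if_pos]
  refine ⟨(i, k, j), hv, Relation.ReflTransGen.single ?_⟩
  rw [isNode_iff] at hv
  exact ⟨isExtNode_iff.mpr (by omega), isExtNode_of_isNode (isNode_iff.mpr (by omega)),
    Or.inl ⟨rfl, rfl, rfl⟩⟩

lemma se_tight_iff {i k j : ℕ} (hj : 1 ≤ j) (hji : j ≤ i) (hi : i ≤ n)
    (hk1 : i + 1 ≤ k + j) (hk2 : k + j ≤ n + 1) :
    SEtight n c f (i, k, j) ↔ f (i, k, j) = (if k + j ≤ n then f (i+1, k, j+1) else 0) := by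
  have hv : IsNode n (i, k, j) := isNode_iff.mpr (by omega)
  rw [SEtight, dP, seNode]
  simp only []
  rw [ext_node hv]
  by_cases h : k + j ≤ n
  · have hw : IsNode n (i+1, k, j+1) := isNode_iff.mpr (by omega)
    rw [if_pos h, ext_node hw]
    constructor <;> intro h' <;> omega
  · rw [if_neg h, ext_far (by simp; omega)]
    constructor <;> intro h' <;> omega

lemma sw_tight_iff {i k j : ℕ} (hj : 1 ≤ j) (hji : j ≤ i) (hi : i ≤ n)
    (hk1 : i + 1 ≤ k + j) (hk2 : k + j ≤ n + 1) :
    SWtight n c f (i, k, j) ↔ (if i + 2 ≤ k + j then f (i+1, k, j) else c k) = f (i, k, j) := by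
  have hv : IsNode n (i, k, j) := isNode_iff.mpr (by omega)
  rw [SWtight, dP, swNode]
  simp only []
  rw [ext_node hv]
  by_cases h : i + 2 ≤ k + j
  · have hw : IsNode n (i+1, k, j) := isNode_iff.mpr (by omega)
    rw [if_pos h, ext_node hw]
    constructor <;> intro h' <;> omega
  · have hnn : ¬ IsNode n (i+1, k, j) := by rw [isNode_iff]; omega
    rw [if_neg h, ext_below hnn hv]
    constructor <;> intro h' <;> omega
end

/-- `a`-bound (value of SE-neighbor at the lower level). -/
noncomputable def aOf (n : ℕ) (prev : ℕ → ℕ → ℤ) (j t : ℕ) : ℤ :=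
  if t + j ≤ n then prev t (j+1) else 0

/-- `b`-bound (value of SW-neighbor at the lower level, or `c`). -/
noncomputable def bOf (c : ℕ → ℤ) (prev : ℕ → ℕ → ℤ) (i j t : ℕ) : ℤ :=
  if i + 2 ≤ t + j then prev t j else c t

/-- Level `i+1` of `f` as a function of `(k, j)`. -/
noncomputable def pf (f : Node → ℤ) (i : ℕ) : ℕ → ℕ → ℤ := fun k j => f (i+1, k, j)

section feas
variable {n : ℕ} {c : ℕ → ℤ} {f : Node → ℤ}

lemma feas_bounds (hf : Feasible n c f) {i j k : ℕ} (hj : 1 ≤ j) (hji : j ≤ i) (hi : i ≤ n)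
    (hk1 : i + 1 ≤ k + j) (hk2 : k + j ≤ n + 1) :
    aOf n (pf f i) j k ≤ f (i, k, j) ∧ f (i, k, j) ≤ bOf c (pf f i) i j k := by
  have hv : IsNode n (i, k, j) := isNode_iff.mpr (by omega)
  constructor
  · rw [aOf]
    by_cases h : k + j ≤ n
    · rw [if_pos h]
      have hw : IsNode n (i+1, k, j+1) := isNode_iff.mpr (by omega)
      have := hf.1 (i,k,j) (i+1,k,j+1) ⟨hv, hw, Or.inr ⟨rfl, rfl, rfl⟩⟩
      rw [pf]; omega
    · rw [if_neg h]
      exact (hf.2.1 _ hv).1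
  · rw [bOf]
    by_cases h : i + 2 ≤ k + j
    · rw [if_pos h]
      have hw : IsNode n (i+1, k, j) := isNode_iff.mpr (by omega)
      have := hf.1 (i+1,k,j) (i,k,j) ⟨hw, hv, Or.inl ⟨rfl, rfl, rfl⟩⟩
      rw [pf]; omega
    · rw [if_neg h]
      exact (hf.2.1 _ hv).2

lemma feas_switch (hf : Feasible n c f) {i j : ℕ} (hj : 1 ≤ j) (hji : j ≤ i) (hi : i ≤ n) :
    ∃ k₀, i + 1 - j ≤ k₀ ∧ k₀ ≤ n + 1 - j ∧
      (∀ t, i + 1 - j ≤ t → t < k₀ → f (i, t, j) = aOf n (pf f i) j t) ∧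
      (∀ t, k₀ < t → t ≤ n + 1 - j → f (i, t, j) = bOf c (pf f i) i j t) := by
  obtain ⟨k, hk1, hk2, hse, hsw⟩ := hf.2.2.1 i j hj hji hi
  refine ⟨k, by omega, by omega, ?_, ?_⟩
  · intro t ht1 ht2
    have h1 : i + 1 ≤ t + j := by omega
    have h2 : t + j ≤ n + 1 := by omega
    have := (se_tight_iff hj hji hi h1 h2).mp (hse t h1 ht2)
    rw [aOf]
    by_cases h : t + j ≤ n
    · rw [if_pos h]; rw [if_pos h] at this; rw [pf]; exact this
    · rw [if_neg h]; rw [if_neg h] at this; exact this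
  · intro t ht1 ht2
    have h1 : i + 1 ≤ t + j := by omega
    have h2 : t + j ≤ n + 1 := by omega
    have := (sw_tight_iff hj hji hi h1 h2).mp (hsw t ht1 h2)
    rw [bOf]
    by_cases h : i + 2 ≤ t + j
    · rw [if_pos h]; rw [if_pos h] at this; rw [pf]; exact this.symm
    · rw [if_neg h]; rw [if_neg h] at this; exact this.symm

lemma feas_bounds' (hf : Feasible n c f) {i j : ℕ} (hj : 1 ≤ j) (hji : j ≤ i) (hi : i ≤ n) :
    ∀ t, i + 1 - j ≤ t → t ≤ n + 1 - j →
      aOf n (pf f i) j t ≤ f (i, t, j) ∧ f (i, t, j) ≤ bOf c (pf f i) i j t := by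
  intro t ht1 ht2
  exact feas_bounds hf hj hji hi (by omega) (by omega)

/-- gtMap in `Ico` form. -/
lemma gtMap_eq {i j : ℕ} (hj : 1 ≤ j) (hji : j ≤ i) (hi : i ≤ n) :
    gtMap n c f i j = (∑ k ∈ Finset.Ico (i + 1 - j) (n + 1 - j + 1), f (i, k, j))
      + ∑ t ∈ Finset.Icc 1 (i - j), c t := by
  rw [gtMap, if_pos ⟨hj, hji, hi⟩, Finset.Ico_add_one_right_eq_Icc]

/-- Uniqueness at one level, from equality at the level below. -/
lemma level_step {f f' : Node → ℤ} (hf : Feasible n c f) (hf' : Feasible n c f')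
    {i : ℕ} (hlow : ∀ k j, IsNode n (i+1, k, j) → f (i+1, k, j) = f' (i+1, k, j))
    {j : ℕ} (hj : 1 ≤ j) (hji : j ≤ i) (hi : i ≤ n)
    (hsum : gtMap n c f i j = gtMap n c f' i j) :
    ∀ k, i + 1 - j ≤ k → k ≤ n + 1 - j → f (i, k, j) = f' (i, k, j) := by
  intro k hk1 hk2
  have hm : i + 1 - j = i + 1 - j := rfl
  -- a and b agree for f and f'
  have hae : ∀ t, i + 1 - j ≤ t → t ≤ n + 1 - j → aOf n (pf f i) j t = aOf n (pf f' i) j t := by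
    intro t ht1 ht2
    rw [aOf, aOf]
    by_cases h : t + j ≤ n
    · rw [if_pos h, if_pos h, pf, pf]
      exact hlow t (j+1) (isNode_iff.mpr (by omega))
    · rw [if_neg h, if_neg h]
  have hbe : ∀ t, i + 1 - j ≤ t → t ≤ n + 1 - j → bOf c (pf f i) i j t = bOf c (pf f' i) i j t := by
    intro t ht1 ht2
    rw [bOf, bOf]
    by_cases h : i + 2 ≤ t + j
    · rw [if_pos h, if_pos h, pf, pf]
      exact hlow t j (isNode_iff.mpr (by omega))
    · rw [if_neg h, if_neg h]
  have hb' : ∀ t, i + 1 - j ≤ t → t ≤ n + 1 - j →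
      aOf n (pf f i) j t ≤ f' (i, t, j) ∧ f' (i, t, j) ≤ bOf c (pf f i) i j t := by
    intro t ht1 ht2
    rw [hae t ht1 ht2, hbe t ht1 ht2]
    exact feas_bounds' hf' hj hji hi t ht1 ht2
  have hsw' : ∃ k₀, i + 1 - j ≤ k₀ ∧ k₀ ≤ n + 1 - j ∧
      (∀ t, i + 1 - j ≤ t → t < k₀ → f' (i, t, j) = aOf n (pf f i) j t) ∧
      (∀ t, k₀ < t → t ≤ n + 1 - j → f' (i, t, j) = bOf c (pf f i) i j t) := by
    obtain ⟨k₀, h1, h2, h3, h4⟩ := feas_switch hf' hj hji hi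
    exact ⟨k₀, h1, h2, fun t u v => by rw [h3 t u v, hae t u (by omega)],
      fun t u v => by rw [h4 t u v, hbe t (by omega) v]⟩
  have hs : ∑ t ∈ Finset.Ico (i + 1 - j) (n + 1 - j + 1), f (i, t, j) = ∑ t ∈ Finset.Ico (i + 1 - j) (n + 1 - j + 1), f' (i, t, j) := by
    have := hsum
    rw [gtMap_eq hj hji hi, gtMap_eq hj hji hi] at this
    omega
  exact stair_unique (i + 1 - j) (n + 1 - j) (aOf n (pf f i) j) (bOf c (pf f i) i j)
    (fun t => f (i, t, j)) (fun t => f' (i, t, j))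
    (feas_bounds' hf hj hji hi) hb'
    (feas_switch hf hj hji hi) hsw' hs k hk1 hk2

lemma feas_inj {f f' : Node → ℤ} (hf : Feasible n c f) (hf' : Feasible n c f')
    (hsum : gtMap n c f = gtMap n c f') : f = f' := by
  have key : ∀ d i k j, n ≤ i + d → IsNode n (i, k, j) → f (i, k, j) = f' (i, k, j) := by
    intro d
    induction d with
    | zero =>
      intro i k j hni hv
      obtain ⟨h1, h2, h3, h4, h5⟩ := isNode_iff.mp hv
      refine level_step hf hf' (fun k' j' hw => ?_) h1 h2 h3 (by rw [hsum]) k (by omega) (by omega)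
      · exact absurd (isNode_iff.mp hw).2.2.1 (by omega)
    | succ d ih =>
      intro i k j hni hv
      obtain ⟨h1, h2, h3, h4, h5⟩ := isNode_iff.mp hv
      rcases le_or_gt n (i + d) with hcase | hcase
      · exact ih i k j hcase hv
      · refine level_step hf hf' (fun k' j' hw => ih (i+1) k' j' (by omega) hw)
          h1 h2 h3 (by rw [hsum]) k (by omega) (by omega)
  funext v
  by_cases hv : IsNode n v
  · obtain ⟨i, k, j⟩ := v
    exact key (n - i) i k j (by omega) hv
  · rw [hf.2.2.2 v hv, hf'.2.2.2 v hv]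
end feas

/-- The step constructing level `i` values from the level `i+1` values `prev`. -/
noncomputable def levStep (n : ℕ) (c : ℕ → ℤ) (x : ℕ → ℕ → ℤ) (prev : ℕ → ℕ → ℤ) (i : ℕ) :
    ℕ → ℕ → ℤ := fun k j =>
  stairFun (i+1-j) (n+1-j) (aOf n prev j) (bOf c prev i j)
    (x i j - ∑ t ∈ Finset.Icc 1 (i-j), c t) k

/-- `levF n c x d k j` : the value at node `(n - d, k, j)` of the inverse function. -/
noncomputable def levF (n : ℕ) (c : ℕ → ℤ) (x : ℕ → ℕ → ℤ) : ℕ → ℕ → ℕ → ℤ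
  | 0 => levStep n c x (fun _ _ => 0) n
  | d+1 => levStep n c x (levF n c x d) (n - (d+1))

/-- The inverse map of `gtMap`. -/
noncomputable def invF (n : ℕ) (c : ℕ → ℤ) (x : ℕ → ℕ → ℤ) : Node → ℤ := fun v =>
  if IsNode n v then levF n c x (n - v.1) v.2.1 v.2.2 else 0

section constr
variable {n : ℕ} {c : ℕ → ℤ} {x : ℕ → ℕ → ℤ}

lemma stairFun_congr {m K : ℕ} {a b a' b' : ℕ → ℤ} {S : ℤ} {k : ℕ} (hmk : m ≤ k) (hk : k ≤ K)
    (ha : ∀ t, m ≤ t → t ≤ K → a t = a' t) (hb : ∀ t, m ≤ t → t ≤ K → b t = b' t) :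
    stairFun m K a b S k = stairFun m K a' b' S k := by
  have hg : ∀ p, m ≤ p → p ≤ K + 1 → gPof m K a b S p = gPof m K a' b' S p := by
    intro p hmp hp
    unfold gPof
    congr 1
    · refine Finset.sum_congr rfl fun t ht => ?_
      rw [Finset.mem_Ico] at ht
      exact ha t ht.1 (by omega)
    · congr 1
      refine Finset.sum_congr rfl fun t ht => ?_
      rw [Finset.mem_Ico] at ht
      exact hb t (by omega) (by omega)
  unfold stairFun
  rw [hg (k+1) (by omega) (by omega), hg k (by omega) (by omega)]

lemma g_val {i k j : ℕ} (hj : 1 ≤ j) (hji : j ≤ i) (hi : i ≤ n)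
    (hk1 : i + 1 ≤ k + j) (hk2 : k + j ≤ n + 1) :
    invF n c x (i, k, j) = stairFun (i+1-j) (n+1-j) (aOf n (pf (invF n c x) i) j)
      (bOf c (pf (invF n c x) i) i j) (x i j - ∑ t ∈ Finset.Icc 1 (i-j), c t) k := by
  have hv : IsNode n (i, k, j) := isNode_iff.mpr (by omega)
  rw [invF]
  rw [if_pos hv]
  simp only []
  rcases eq_or_lt_of_le hi with rfl | hlt
  · rw [Nat.sub_self, levF, levStep]
    refine stairFun_congr (by omega) (by omega) (fun t ht1 ht2 => ?_) (fun t ht1 ht2 => ?_)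
    · rw [aOf, aOf, if_neg (by omega), if_neg (by omega)]
    · rw [bOf, bOf, if_neg (by omega), if_neg (by omega)]
  · have hd : n - i = (n - i - 1) + 1 := by omega
    rw [hd, levF]
    have hi' : n - (n - i - 1 + 1) = i := by omega
    rw [hi', levStep]
    refine stairFun_congr (by omega) (by omega) (fun t ht1 ht2 => ?_) (fun t ht1 ht2 => ?_)
    · rw [aOf, aOf]
      by_cases h : t + j ≤ n
      · rw [if_pos h, if_pos h, pf, invF,
          if_pos (isNode_iff.mpr (by omega) : IsNode n (i+1, t, j+1))]
        show _ = levF n c x (n - (i+1)) t (j+1)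
        congr 1
      · rw [if_neg h, if_neg h]
    · rw [bOf, bOf]
      by_cases h : i + 2 ≤ t + j
      · rw [if_pos h, if_pos h, pf, invF,
          if_pos (isNode_iff.mpr (by omega) : IsNode n (i+1, t, j))]
        show _ = levF n c x (n - (i+1)) t j
        congr 1
      · rw [if_neg h, if_neg h]
end constr

/-- The induction invariant for the inverse construction, at level `i`. -/
def InvP (n : ℕ) (c : ℕ → ℤ) (x : ℕ → ℕ → ℤ) (i : ℕ) : Prop :=
  ∀ j, 1 ≤ j → j ≤ i →
    (∑ t ∈ Finset.Ico (i+1-j) (n+1-j+1), invF n c x (i, t, j)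
        = x i j - ∑ t ∈ Finset.Icc 1 (i-j), c t) ∧
    (∀ t, i+1-j ≤ t → t ≤ n+1-j →
      (aOf n (pf (invF n c x) i) j t ≤ invF n c x (i,t,j) ∧
        invF n c x (i,t,j) ≤ bOf c (pf (invF n c x) i) i j t) ∧
      0 ≤ invF n c x (i,t,j) ∧ invF n c x (i,t,j) ≤ c t) ∧
    ∃ k₀, i+1-j ≤ k₀ ∧ k₀ ≤ n+1-j ∧
      (∀ t, i+1-j ≤ t → t < k₀ → invF n c x (i,t,j) = aOf n (pf (invF n c x) i) j t) ∧
      (∀ t, k₀ < t → t ≤ n+1-j → invF n c x (i,t,j) = bOf c (pf (invF n c x) i) i j t)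

section constr2
variable {n : ℕ} {c : ℕ → ℤ} {x : ℕ → ℕ → ℤ}

lemma inv_step (hc : ∀ k, 1 ≤ k → k ≤ n → 0 ≤ c k) (hx : IsGT n c x)
    {i : ℕ} (hi1 : 1 ≤ i) (hi : i ≤ n)
    (hlow : i = n ∨ (i + 1 ≤ n ∧ InvP n c x (i+1))) : InvP n c x i := by
  intro j hj hji
  have hmK : i + 1 - j ≤ n + 1 - j := by omega
  -- a ≤ b, 0 ≤ a, b ≤ c on the multinode range
  have hab : ∀ t, i+1-j ≤ t → t ≤ n+1-j →
      (aOf n (pf (invF n c x) i) j t ≤ bOf c (pf (invF n c x) i) i j t) ∧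
      0 ≤ aOf n (pf (invF n c x) i) j t ∧ bOf c (pf (invF n c x) i) i j t ≤ c t := by
    intro t ht1 ht2
    simp only [aOf, bOf, pf]
    have hct : 0 ≤ c t := hc t (by omega) (by omega)
    by_cases h1 : t + j ≤ n
    · have hlow' : InvP n c x (i+1) := by
        rcases hlow with hcase | ⟨hin, hlow'⟩
        · omega
        · exact hlow'
      have B1 := (hlow' (j+1) (by omega) (by omega)).2.1 t (by omega) (by omega)
      have B1u := B1.1.2
      have B1pos := B1.2
      simp only [bOf, pf] at B1u
      by_cases h2 : i + 2 ≤ t + j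
      · rw [if_pos h1, if_pos h2]
        rw [if_pos (show i+1+2 ≤ t+(j+1) by omega)] at B1u
        have B2 := (hlow' j hj (by omega)).2.1 t (by omega) (by omega)
        have B2l := B2.1.1
        have B2pos := B2.2
        simp only [aOf, pf] at B2l
        rw [if_pos h1] at B2l
        refine ⟨by omega, by omega, by omega⟩
      · rw [if_pos h1, if_neg h2]
        refine ⟨by omega, by omega, by omega⟩
    · rw [if_neg h1]
      by_cases h2 : i + 2 ≤ t + j
      · have hlow' : InvP n c x (i+1) := by
          rcases hlow with hcase | ⟨hin, hlow'⟩
          · omega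
          · exact hlow'
        have B2 := (hlow' j hj (by omega)).2.1 t (by omega) (by omega)
        have B2pos := B2.2
        rw [if_pos h2]
        refine ⟨by omega, by omega, by omega⟩
      · rw [if_neg h2]
        refine ⟨by omega, by omega, by omega⟩
  have hab' : ∀ t, i+1-j ≤ t → t ≤ n+1-j →
      aOf n (pf (invF n c x) i) j t ≤ bOf c (pf (invF n c x) i) i j t :=
    fun t h1 h2 => (hab t h1 h2).1
  -- the sum bounds
  have hS1 : ∑ t ∈ Finset.Ico (i+1-j) (n+1-j+1), aOf n (pf (invF n c x) i) j t
      ≤ x i j - ∑ t ∈ Finset.Icc 1 (i-j), c t := by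
    rcases hlow with hcase | ⟨hin, hlow'⟩
    · have hsing : Finset.Ico (i+1-j) (n+1-j+1) = {i+1-j} := by
        rw [show n+1-j = i+1-j by omega]
        exact Nat.Ico_succ_singleton _
      rw [hsing, Finset.sum_singleton, aOf, if_neg (by omega)]
      have hgt := (hx.2.2.2 j hj (by omega)).2
      rw [hcase]
      omega
    · have htop : ∑ t ∈ Finset.Ico (i+1-j) (n+1-j+1), aOf n (pf (invF n c x) i) j t
          = (∑ t ∈ Finset.Ico (i+1-j) (n+1-j), aOf n (pf (invF n c x) i) j t)
            + aOf n (pf (invF n c x) i) j (n+1-j) :=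
        Finset.sum_Ico_succ_top hmK _
      have hz : aOf n (pf (invF n c x) i) j (n+1-j) = 0 := by
        rw [aOf, if_neg (by omega)]
      have hcg : ∑ t ∈ Finset.Ico (i+1-j) (n+1-j), aOf n (pf (invF n c x) i) j t
          = ∑ t ∈ Finset.Ico (i+1-j) (n+1-j), invF n c x (i+1, t, j+1) := by
        refine Finset.sum_congr rfl fun t ht => ?_
        rw [Finset.mem_Ico] at ht
        rw [aOf, if_pos (by omega), pf]
      have hlsum := (hlow' (j+1) (by omega) (by omega)).1
      rw [show Finset.Ico (i+1+1-(j+1)) (n+1-(j+1)+1) = Finset.Ico (i+1-j) (n+1-j) by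
        congr 1 <;> omega] at hlsum
      rw [show i+1-(j+1) = i-j by omega] at hlsum
      have hgt := hx.2.2.1 i j hj hji hin
      omega
  have hS2 : x i j - ∑ t ∈ Finset.Icc 1 (i-j), c t
      ≤ ∑ t ∈ Finset.Ico (i+1-j) (n+1-j+1), bOf c (pf (invF n c x) i) i j t := by
    rcases hlow with hcase | ⟨hin, hlow'⟩
    · have hsing : Finset.Ico (i+1-j) (n+1-j+1) = {i+1-j} := by
        rw [show n+1-j = i+1-j by omega]
        exact Nat.Ico_succ_singleton _
      rw [hsing, Finset.sum_singleton, bOf, if_neg (by omega)]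
      have h1 := (hx.2.2.2 j hj (by omega)).1
      rw [Finset.sum_Icc_succ_top (by omega : 1 ≤ (n-j)+1) c] at h1
      rw [hcase, show n+1-j = n-j+1 by omega]
      omega
    · have hbot := Bsplit (i+1-j) (n+1-j) (bOf c (pf (invF n c x) i) i j) (i+1-j)
        le_rfl hmK
      have hbm : bOf c (pf (invF n c x) i) i j (i+1-j) = c (i+1-j) := by
        rw [bOf, if_neg (by omega)]
      have hcg : ∑ t ∈ Finset.Ico (i+1-j+1) (n+1-j+1), bOf c (pf (invF n c x) i) i j t
          = ∑ t ∈ Finset.Ico (i+1-j+1) (n+1-j+1), invF n c x (i+1, t, j) := by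
        refine Finset.sum_congr rfl fun t ht => ?_
        rw [Finset.mem_Ico] at ht
        rw [bOf, if_pos (by omega), pf]
      have hlsum := (hlow' j hj (by omega)).1
      rw [show Finset.Ico (i+1+1-j) (n+1-j+1) = Finset.Ico (i+1-j+1) (n+1-j+1) by
        congr 1 <;> omega] at hlsum
      have hsplit : ∑ t ∈ Finset.Icc 1 (i+1-j), c t
          = ∑ t ∈ Finset.Icc 1 (i-j), c t + c (i+1-j) := by
        rw [show i+1-j = (i-j)+1 by omega, Finset.sum_Icc_succ_top (by omega) c]
      have hgt := hx.2.1 (i+1) j hj (by omega) (by omega)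
      rw [show i+1-1 = i by omega] at hgt
      omega
  -- values are the staircase function
  have hval : ∀ t, i+1-j ≤ t → t ≤ n+1-j → invF n c x (i, t, j)
      = stairFun (i+1-j) (n+1-j) (aOf n (pf (invF n c x) i) j)
        (bOf c (pf (invF n c x) i) i j) (x i j - ∑ t ∈ Finset.Icc 1 (i-j), c t) t :=
    fun t h1 h2 => g_val hj hji hi (by omega) (by omega)
  refine ⟨?_, ?_, ?_⟩
  · have hsumeq : ∑ t ∈ Finset.Ico (i+1-j) (n+1-j+1), invF n c x (i, t, j)
        = ∑ t ∈ Finset.Ico (i+1-j) (n+1-j+1), stairFun (i+1-j) (n+1-j)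
            (aOf n (pf (invF n c x) i) j) (bOf c (pf (invF n c x) i) i j)
            (x i j - ∑ t ∈ Finset.Icc 1 (i-j), c t) t :=
      Finset.sum_congr rfl fun t ht => by
        rw [Finset.mem_Ico] at ht
        exact hval t ht.1 (by omega)
    rw [hsumeq]
    exact stairFun_sum _ _ _ _ _ hS1 hS2 hmK
  · intro t ht1 ht2
    have hb := stairFun_bounds (i+1-j) (n+1-j) _ _
      (x i j - ∑ t ∈ Finset.Icc 1 (i-j), c t) hab' t ht1 ht2
    rw [← hval t ht1 ht2] at hb
    have := hab t ht1 ht2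
    exact ⟨hb, by omega, by omega⟩
  · obtain ⟨k₀, h1, h2, h3, h4⟩ := stairFun_switch (i+1-j) (n+1-j) _ _
      (x i j - ∑ t ∈ Finset.Icc 1 (i-j), c t) hab' hS1 hmK
    exact ⟨k₀, h1, h2, fun t u v => by rw [hval t u (by omega)]; exact h3 t u v,
      fun t u v => by rw [hval t (by omega) v]; exact h4 t u v⟩

lemma inv_all (hc : ∀ k, 1 ≤ k → k ≤ n → 0 ≤ c k) (hx : IsGT n c x) :
    ∀ i, 1 ≤ i → i ≤ n → InvP n c x i := by
  have key : ∀ d i, n ≤ i + d → 1 ≤ i → i ≤ n → InvP n c x i := by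
    intro d
    induction d with
    | zero =>
      intro i hni hi1 hi
      exact inv_step hc hx hi1 hi (Or.inl (by omega))
    | succ d ih =>
      intro i hni hi1 hi
      rcases le_or_gt n (i + d) with hcase | hcase
      · exact ih i hcase hi1 hi
      · exact inv_step hc hx hi1 hi (Or.inr ⟨by omega, ih (i+1) (by omega) (by omega) (by omega)⟩)
  intro i hi1 hi
  exact key (n - i) i (by omega) hi1 hi
end constr2

section fin
variable {n : ℕ} {c : ℕ → ℤ} {x : ℕ → ℕ → ℤ} {f : Node → ℤ}

lemma inv_feasible (hc : ∀ k, 1 ≤ k → k ≤ n → 0 ≤ c k) (hx : IsGT n c x) :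
    Feasible n c (invF n c x) := by
  have I := inv_all hc hx
  refine ⟨?_, ?_, ?_, ?_⟩
  · rintro ⟨ui, uk, uj⟩ ⟨wi, wk, wj⟩ ⟨hu, hw, hd⟩
    have hu' := isNode_iff.mp hu
    have hw' := isNode_iff.mp hw
    rcases hd with ⟨e1, e2, e3⟩ | ⟨e1, e2, e3⟩
    · -- ascending
      have f1 : uk = wk := e1
      have f2 : uj = wj := e2
      have f3 : ui = wi + 1 := e3
      have hb := ((I wi (by omega) (by omega) wj (by omega) (by omega)).2.1 wk
        (by omega) (by omega)).1.2
      simp only [bOf, pf] at hb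
      rw [if_pos (by omega)] at hb
      have e : ((ui, uk, uj) : Node) = ((wi + 1 : ℕ), wk, wj) := by
        simp only [Prod.mk.injEq]
        omega
      rw [e]
      omega
    · -- descending
      have f1 : uk = wk := e1
      have f2 : wj = uj + 1 := e2
      have f3 : wi = ui + 1 := e3
      have hb := ((I ui (by omega) (by omega) uj (by omega) (by omega)).2.1 uk
        (by omega) (by omega)).1.1
      simp only [aOf, pf] at hb
      rw [if_pos (by omega)] at hb
      have e : ((wi, wk, wj) : Node) = ((ui + 1 : ℕ), uk, uj + 1) := by
        simp only [Prod.mk.injEq]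
        omega
      rw [e]
      omega
  · rintro ⟨i, k, j⟩ hv
    have hv' := isNode_iff.mp hv
    have := ((I i (by omega) (by omega) j (by omega) (by omega)).2.1 k
      (by omega) (by omega)).2
    simp only []
    exact this
  · intro i j hj hji hi
    obtain ⟨k₀, h1, h2, h3, h4⟩ := (I i (by omega) hi j hj hji).2.2
    refine ⟨k₀, by omega, by omega, ?_, ?_⟩
    · intro k' hk1 hk2
      have hval := h3 k' (by omega) hk2
      refine (se_tight_iff hj hji hi (by omega) (by omega)).mpr ?_
      simp only [aOf, pf] at hval
      exact hval
    · intro k' hk1 hk2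
      have hval := h4 k' hk1 (by omega)
      refine (sw_tight_iff hj hji hi (by omega) (by omega)).mpr ?_
      simp only [bOf, pf] at hval
      exact hval.symm
  · intro v hv
    rw [invF, if_neg hv]

lemma inv_gt (hc : ∀ k, 1 ≤ k → k ≤ n → 0 ≤ c k) (hx : IsGT n c x) :
    gtMap n c (invF n c x) = x := by
  funext i j
  by_cases h : 1 ≤ j ∧ j ≤ i ∧ i ≤ n
  · rw [gtMap, if_pos h]
    have hs := (inv_all hc hx i (by omega) h.2.2 j h.1 h.2.1).1
    rw [← Finset.Ico_add_one_right_eq_Icc]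
    omega
  · rw [gtMap, if_neg h]
    exact (hx.1 i j h).symm

lemma gt_of_feasible (hc : ∀ k, 1 ≤ k → k ≤ n → 0 ≤ c k) (hf : Feasible n c f) :
    IsGT n c (gtMap n c f) := by
  refine ⟨?_, ?_, ?_, ?_⟩
  · intro i j h
    rw [gtMap, if_neg h]
  · intro i j hj hji hi
    rw [gtMap_eq (i := i-1) (j := j) hj (by omega) (by omega), gtMap_eq (i := i) (j := j) hj (by omega) hi]
    have hsplit1 : ∑ t ∈ Finset.Ico (i-1+1-j) (n+1-j+1), f (i-1, t, j)
        = f (i-1, i-1+1-j, j) + ∑ t ∈ Finset.Ico (i+1-j) (n+1-j+1), f (i-1, t, j) := by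
      have hB := Bsplit (i-1+1-j) (n+1-j) (fun t => f (i-1, t, j)) (i-1+1-j)
        le_rfl (by omega)
      rw [show (i-1+1-j)+1 = i+1-j by omega] at hB
      exact hB
    have hterm : ∀ t ∈ Finset.Ico (i+1-j) (n+1-j+1), f (i-1, t, j) ≤ f (i, t, j) := by
      intro t ht
      rw [Finset.mem_Ico] at ht
      have := hf.1 (i, t, j) (i-1, t, j)
        ⟨isNode_iff.mpr (by omega), isNode_iff.mpr (by omega),
          Or.inl ⟨rfl, rfl, by omega⟩⟩
      omega
    have hsum := Finset.sum_le_sum hterm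
    have hc1 : f (i-1, i-1+1-j, j) ≤ c (i-1+1-j) :=
      (hf.2.1 (i-1, i-1+1-j, j) (isNode_iff.mpr (by omega))).2
    have hcsplit : ∑ t ∈ Finset.Icc 1 (i-j), c t
        = ∑ t ∈ Finset.Icc 1 (i-1-j), c t + c (i-1+1-j) := by
      rw [show i-1+1-j = (i-1-j)+1 by omega, show i-j = (i-1-j)+1 by omega,
        Finset.sum_Icc_succ_top (by omega) c]
    omega
  · intro i j hj hji hi
    rw [gtMap_eq (i := i+1) (j := j+1) (by omega) (by omega) (by omega), gtMap_eq (i := i) (j := j) hj hji (by omega)]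
    rw [show Finset.Ico (i+1+1-(j+1)) (n+1-(j+1)+1) = Finset.Ico (i+1-j) (n+1-j) by
      congr 1 <;> omega]
    rw [show i+1-(j+1) = i-j by omega]
    have htop : ∑ t ∈ Finset.Ico (i+1-j) (n+1-j+1), f (i, t, j)
        = (∑ t ∈ Finset.Ico (i+1-j) (n+1-j), f (i, t, j)) + f (i, n+1-j, j) :=
      Finset.sum_Ico_succ_top (by omega) _
    have hterm : ∀ t ∈ Finset.Ico (i+1-j) (n+1-j), f (i+1, t, j+1) ≤ f (i, t, j) := by
      intro t ht
      rw [Finset.mem_Ico] at ht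
      have := hf.1 (i, t, j) (i+1, t, j+1)
        ⟨isNode_iff.mpr (by omega), isNode_iff.mpr (by omega),
          Or.inr ⟨rfl, rfl, rfl⟩⟩
      omega
    have hsum := Finset.sum_le_sum hterm
    have hpos : 0 ≤ f (i, n+1-j, j) :=
      (hf.2.1 (i, n+1-j, j) (isNode_iff.mpr (by omega))).1
    omega
  · intro i hi1 hi
    rw [gtMap_eq hi1 hi le_rfl]
    have hsing : Finset.Ico (n+1-i) (n+1-i+1) = {n+1-i} := Nat.Ico_succ_singleton _
    rw [hsing, Finset.sum_singleton]
    have hb := hf.2.1 (n, n+1-i, i) (isNode_iff.mpr (by omega))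
    simp only [] at hb
    have hcsplit : ∑ t ∈ Finset.Icc 1 (n-i+1), c t
        = ∑ t ∈ Finset.Icc 1 (n-i), c t + c (n-i+1) := by
      rw [Finset.sum_Icc_succ_top (by omega) c]
    rw [show n+1-i = n-i+1 by omega] at hb ⊢
    omega
end fin

/-- Remark 1. The map `f ↦ (x_{ij})`,
`x_{ij} = Σ_{v ∈ V_i(j)} f(v) + c_1 + ⋯ + c_{i-j}`, is a bijection from `F(c)` onto
the set of Gelfand–Tsetlin patterns for `λ`. -/
theorem statement14 (n : ℕ) (hn : 1 ≤ n) (c : ℕ → ℤ)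
    (hc : ∀ k, 1 ≤ k → k ≤ n → 0 ≤ c k) :
    Set.BijOn (gtMap n c) {f | Feasible n c f} {x | IsGT n c x} := by
  refine ⟨fun f hf => gt_of_feasible hc hf,
    fun f hf f' hf' h => feas_inj hf hf' h,
    fun x hx => ⟨invF n c x, inv_feasible hc hx, inv_gt hc hx⟩⟩
end CrystalA
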